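/- Let r ≥ 3 and 2 ≤ t ≤ (r+4)/4, and set n = 3r−t. If ρ_2(K(n,r)) ≥ 5, then there exists a 2-packing S of K(n,r) with |S| = 5 such that every element x ∈ [n] belongs to at most 2 of the sets in S. -/

import Mathlib

open Finset

/-- The vertex set of the Kneser graph `K(n,r)`: the `r`-element subsets of `[n] = {1,…,n}`. -/
def KneserVerts (n r : ℕ) : Finset (Finset ℕ) := (Finset.Icc 1 n).powersetCard r

/-- Adjacency in a Kneser graph: distinct disjoint sets. -/
def KneserAdj (u v : Finset ℕ) : Prop := u ≠ v ∧ Disjoint u v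

instance (u v : Finset ℕ) : Decidable (KneserAdj u v) := by
  unfold KneserAdj; infer_instance

/-- `D` is a `k`-dominating set of `K(n,r)`: every vertex outside `D` has at least
`k` neighbours in `D`. -/
def IsKDomSet (n r k : ℕ) (D : Finset (Finset ℕ)) : Prop :=
  D ⊆ KneserVerts n r ∧
    ∀ v ∈ KneserVerts n r, v ∉ D → k ≤ (D.filter fun u => KneserAdj v u).card

/-- `D` is a `k`-tuple dominating set of `K(n,r)`: every vertex has at least `k`
vertices of `D` in its closed neighbourhood. -/
def IsKTupleDomSet (n r k : ℕ) (D : Finset (Finset ℕ)) : Prop :=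
  D ⊆ KneserVerts n r ∧
    ∀ v ∈ KneserVerts n r, k ≤ (D.filter fun u => u = v ∨ KneserAdj v u).card

/-- `D` is a `k`-tuple total dominating set of `K(n,r)`: every vertex has at least
`k` neighbours in `D`. -/
def IsKTupleTotalDomSet (n r k : ℕ) (D : Finset (Finset ℕ)) : Prop :=
  D ⊆ KneserVerts n r ∧
    ∀ v ∈ KneserVerts n r, k ≤ (D.filter fun u => KneserAdj v u).card

/-- The `k`-domination number `γ_k(K(n,r))`. -/
noncomputable def kdomNum (n r k : ℕ) : ℕ :=
  sInf {m | ∃ D, IsKDomSet n r k D ∧ D.card = m}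

/-- The `k`-tuple domination number `γ_{×k}(K(n,r))`. -/
noncomputable def ktupleDomNum (n r k : ℕ) : ℕ :=
  sInf {m | ∃ D, IsKTupleDomSet n r k D ∧ D.card = m}

/-- The `k`-tuple total domination number `γ_{×k,t}(K(n,r))`. -/
noncomputable def ktupleTotalDomNum (n r k : ℕ) : ℕ :=
  sInf {m | ∃ D, IsKTupleTotalDomSet n r k D ∧ D.card = m}

/-- `S` is a 2-packing of `K(n,r)`: any two distinct members are neither adjacent
nor have a common neighbour (i.e. are at distance at least 3). -/
def IsTwoPacking (n r : ℕ) (S : Finset (Finset ℕ)) : Prop :=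
  S ⊆ KneserVerts n r ∧
    ∀ u ∈ S, ∀ v ∈ S, u ≠ v →
      ¬ KneserAdj u v ∧ ∀ w ∈ KneserVerts n r, ¬ (KneserAdj u w ∧ KneserAdj w v)

/-- The 2-packing number `ρ₂(K(n,r))`. -/
noncomputable def twoPackingNum (n r : ℕ) : ℕ :=
  sSup {m | ∃ S, IsTwoPacking n r S ∧ S.card = m}

/-- A clique in a Kneser graph: a family of pairwise disjoint sets. -/
def IsKneserClique (D : Finset (Finset ℕ)) : Prop :=
  ∀ u ∈ D, ∀ v ∈ D, u ≠ v → Disjoint u v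

def K1 (c p : ℕ) : Finset ℕ := Finset.Icc 1 (4*c) ∪ Finset.Icc (10*c+1) (10*c+p)

def K2 (c p : ℕ) : Finset ℕ := Finset.Icc 1 c ∪ Finset.Icc (4*c+1) (7*c) ∪ Finset.Icc (10*c+p+1) (10*c+2*p)

def K3 (c p : ℕ) : Finset ℕ := Finset.Icc (c+1) (2*c) ∪ Finset.Icc (4*c+1) (5*c) ∪ Finset.Icc (7*c+1) (9*c) ∪ Finset.Icc (10*c+2*p+1) (10*c+3*p)

def K4 (c p : ℕ) : Finset ℕ := Finset.Icc (2*c+1) (3*c) ∪ Finset.Icc (5*c+1) (6*c) ∪ Finset.Icc (7*c+1) (8*c) ∪ Finset.Icc (9*c+1) (10*c) ∪ Finset.Icc (10*c+3*p+1) (10*c+4*p)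

def K5 (c p : ℕ) : Finset ℕ := Finset.Icc (3*c+1) (4*c) ∪ Finset.Icc (6*c+1) (7*c) ∪ Finset.Icc (8*c+1) (10*c) ∪ Finset.Icc (10*c+4*p+1) (10*c+5*p)

lemma memK1 (c p x : ℕ) : x ∈ K1 c p ↔ (1 ≤ x ∧ x ≤ 4*c) ∨ (10*c+1 ≤ x ∧ x ≤ 10*c+p) := by
  simp only [K1, Finset.mem_union, Finset.mem_Icc]
  all_goals omega

lemma memK2 (c p x : ℕ) : x ∈ K2 c p ↔ (1 ≤ x ∧ x ≤ c) ∨ (4*c+1 ≤ x ∧ x ≤ 7*c) ∨ (10*c+p+1 ≤ x ∧ x ≤ 10*c+2*p) := by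
  simp only [K2, Finset.mem_union, Finset.mem_Icc]
  all_goals omega

lemma memK3 (c p x : ℕ) : x ∈ K3 c p ↔ (c+1 ≤ x ∧ x ≤ 2*c) ∨ (4*c+1 ≤ x ∧ x ≤ 5*c) ∨ (7*c+1 ≤ x ∧ x ≤ 9*c) ∨ (10*c+2*p+1 ≤ x ∧ x ≤ 10*c+3*p) := by
  simp only [K3, Finset.mem_union, Finset.mem_Icc]
  all_goals omega

lemma memK4 (c p x : ℕ) : x ∈ K4 c p ↔ (2*c+1 ≤ x ∧ x ≤ 3*c) ∨ (5*c+1 ≤ x ∧ x ≤ 6*c) ∨ (7*c+1 ≤ x ∧ x ≤ 8*c) ∨ (9*c+1 ≤ x ∧ x ≤ 10*c) ∨ (10*c+3*p+1 ≤ x ∧ x ≤ 10*c+4*p) := by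
  simp only [K4, Finset.mem_union, Finset.mem_Icc]
  all_goals omega

lemma memK5 (c p x : ℕ) : x ∈ K5 c p ↔ (3*c+1 ≤ x ∧ x ≤ 4*c) ∨ (6*c+1 ≤ x ∧ x ≤ 7*c) ∨ (8*c+1 ≤ x ∧ x ≤ 10*c) ∨ (10*c+4*p+1 ≤ x ∧ x ≤ 10*c+5*p) := by
  simp only [K5, Finset.mem_union, Finset.mem_Icc]
  all_goals omega

lemma cardK1 (c p : ℕ) (hc : 1 ≤ c) : (K1 c p).card = 4*c + p := by
  rw [K1, Finset.card_union_of_disjoint (by rw [Finset.disjoint_left]; intro a ha hb; simp only [Finset.mem_union, Finset.mem_Icc] at ha hb; omega)]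
  simp only [Nat.card_Icc]
  omega

lemma cardK2 (c p : ℕ) (hc : 1 ≤ c) : (K2 c p).card = 4*c + p := by
  rw [K2, Finset.card_union_of_disjoint (by rw [Finset.disjoint_left]; intro a ha hb; simp only [Finset.mem_union, Finset.mem_Icc] at ha hb; omega), Finset.card_union_of_disjoint (by rw [Finset.disjoint_left]; intro a ha hb; simp only [Finset.mem_union, Finset.mem_Icc] at ha hb; omega)]
  simp only [Nat.card_Icc]
  omega

lemma cardK3 (c p : ℕ) (hc : 1 ≤ c) : (K3 c p).card = 4*c + p := by
  rw [K3, Finset.card_union_of_disjoint (by rw [Finset.disjoint_left]; intro a ha hb; simp only [Finset.mem_union, Finset.mem_Icc] at ha hb; omega), Finset.card_union_of_disjoint (by rw [Finset.disjoint_left]; intro a ha hb; simp only [Finset.mem_union, Finset.mem_Icc] at ha hb; omega), Finset.card_union_of_disjoint (by rw [Finset.disjoint_left]; intro a ha hb; simp only [Finset.mem_union, Finset.mem_Icc] at ha hb; omega)]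
  simp only [Nat.card_Icc]
  omega

lemma cardK4 (c p : ℕ) (hc : 1 ≤ c) : (K4 c p).card = 4*c + p := by
  rw [K4, Finset.card_union_of_disjoint (by rw [Finset.disjoint_left]; intro a ha hb; simp only [Finset.mem_union, Finset.mem_Icc] at ha hb; omega), Finset.card_union_of_disjoint (by rw [Finset.disjoint_left]; intro a ha hb; simp only [Finset.mem_union, Finset.mem_Icc] at ha hb; omega), Finset.card_union_of_disjoint (by rw [Finset.disjoint_left]; intro a ha hb; simp only [Finset.mem_union, Finset.mem_Icc] at ha hb; omega), Finset.card_union_of_disjoint (by rw [Finset.disjoint_left]; intro a ha hb; simp only [Finset.mem_union, Finset.mem_Icc] at ha hb; omega)]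
  simp only [Nat.card_Icc]
  omega

lemma cardK5 (c p : ℕ) (hc : 1 ≤ c) : (K5 c p).card = 4*c + p := by
  rw [K5, Finset.card_union_of_disjoint (by rw [Finset.disjoint_left]; intro a ha hb; simp only [Finset.mem_union, Finset.mem_Icc] at ha hb; omega), Finset.card_union_of_disjoint (by rw [Finset.disjoint_left]; intro a ha hb; simp only [Finset.mem_union, Finset.mem_Icc] at ha hb; omega), Finset.card_union_of_disjoint (by rw [Finset.disjoint_left]; intro a ha hb; simp only [Finset.mem_union, Finset.mem_Icc] at ha hb; omega)]
  simp only [Nat.card_Icc]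
  omega

lemma kvK1 (n r c p : ℕ) (hc : 1 ≤ c) (hcp : 4*c + p = r) (hnn : 10*c + 5*p ≤ n) :
    K1 c p ∈ KneserVerts n r := by
  rw [KneserVerts, Finset.mem_powersetCard]
  refine ⟨fun x hx => ?_, by rw [cardK1 c p hc, hcp]⟩
  rw [memK1] at hx
  rw [Finset.mem_Icc]
  omega

lemma kvK2 (n r c p : ℕ) (hc : 1 ≤ c) (hcp : 4*c + p = r) (hnn : 10*c + 5*p ≤ n) :
    K2 c p ∈ KneserVerts n r := by
  rw [KneserVerts, Finset.mem_powersetCard]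
  refine ⟨fun x hx => ?_, by rw [cardK2 c p hc, hcp]⟩
  rw [memK2] at hx
  rw [Finset.mem_Icc]
  omega

lemma kvK3 (n r c p : ℕ) (hc : 1 ≤ c) (hcp : 4*c + p = r) (hnn : 10*c + 5*p ≤ n) :
    K3 c p ∈ KneserVerts n r := by
  rw [KneserVerts, Finset.mem_powersetCard]
  refine ⟨fun x hx => ?_, by rw [cardK3 c p hc, hcp]⟩
  rw [memK3] at hx
  rw [Finset.mem_Icc]
  omega

lemma kvK4 (n r c p : ℕ) (hc : 1 ≤ c) (hcp : 4*c + p = r) (hnn : 10*c + 5*p ≤ n) :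
    K4 c p ∈ KneserVerts n r := by
  rw [KneserVerts, Finset.mem_powersetCard]
  refine ⟨fun x hx => ?_, by rw [cardK4 c p hc, hcp]⟩
  rw [memK4] at hx
  rw [Finset.mem_Icc]
  omega

lemma kvK5 (n r c p : ℕ) (hc : 1 ≤ c) (hcp : 4*c + p = r) (hnn : 10*c + 5*p ≤ n) :
    K5 c p ∈ KneserVerts n r := by
  rw [KneserVerts, Finset.mem_powersetCard]
  refine ⟨fun x hx => ?_, by rw [cardK5 c p hc, hcp]⟩
  rw [memK5] at hx
  rw [Finset.mem_Icc]
  omega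

lemma interK12 (c p : ℕ) : K1 c p ∩ K2 c p = Finset.Icc (1) (c) := by
  ext x
  simp only [Finset.mem_inter, Finset.mem_Icc, memK1, memK2]
  omega

lemma interK13 (c p : ℕ) : K1 c p ∩ K3 c p = Finset.Icc (c+1) (2*c) := by
  ext x
  simp only [Finset.mem_inter, Finset.mem_Icc, memK1, memK3]
  omega

lemma interK14 (c p : ℕ) : K1 c p ∩ K4 c p = Finset.Icc (2*c+1) (3*c) := by
  ext x
  simp only [Finset.mem_inter, Finset.mem_Icc, memK1, memK4]
  omega

lemma interK15 (c p : ℕ) : K1 c p ∩ K5 c p = Finset.Icc (3*c+1) (4*c) := by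
  ext x
  simp only [Finset.mem_inter, Finset.mem_Icc, memK1, memK5]
  omega

lemma interK23 (c p : ℕ) : K2 c p ∩ K3 c p = Finset.Icc (4*c+1) (5*c) := by
  ext x
  simp only [Finset.mem_inter, Finset.mem_Icc, memK2, memK3]
  omega

lemma interK24 (c p : ℕ) : K2 c p ∩ K4 c p = Finset.Icc (5*c+1) (6*c) := by
  ext x
  simp only [Finset.mem_inter, Finset.mem_Icc, memK2, memK4]
  omega

lemma interK25 (c p : ℕ) : K2 c p ∩ K5 c p = Finset.Icc (6*c+1) (7*c) := by
  ext x
  simp only [Finset.mem_inter, Finset.mem_Icc, memK2, memK5]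
  omega

lemma interK34 (c p : ℕ) : K3 c p ∩ K4 c p = Finset.Icc (7*c+1) (8*c) := by
  ext x
  simp only [Finset.mem_inter, Finset.mem_Icc, memK3, memK4]
  omega

lemma interK35 (c p : ℕ) : K3 c p ∩ K5 c p = Finset.Icc (8*c+1) (9*c) := by
  ext x
  simp only [Finset.mem_inter, Finset.mem_Icc, memK3, memK5]
  omega

lemma interK45 (c p : ℕ) : K4 c p ∩ K5 c p = Finset.Icc (9*c+1) (10*c) := by
  ext x
  simp only [Finset.mem_inter, Finset.mem_Icc, memK4, memK5]
  omega

lemma Kpair' {n r t : ℕ} (hnt : n + t ≤ 3 * r) {u v : Finset ℕ}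
    (hu : u ∈ KneserVerts n r) (hv : v ∈ KneserVerts n r)
    (a b : ℕ) (hab : u ∩ v = Finset.Icc a b) (h1 : a ≤ b) (h2 : b + 2 ≤ a + t) :
    ¬ KneserAdj u v ∧ ∀ w ∈ KneserVerts n r, ¬ (KneserAdj u w ∧ KneserAdj w v) := by
  rw [KneserVerts, Finset.mem_powersetCard] at hu hv
  constructor
  · rintro ⟨-, hd⟩
    have hmem : a ∈ u ∩ v := by
      rw [hab, Finset.mem_Icc]
      omega
    rw [Finset.mem_inter] at hmem
    exact (Finset.disjoint_left.mp hd hmem.1) hmem.2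
  · rintro w hw ⟨⟨-, d1⟩, ⟨-, d2⟩⟩
    rw [KneserVerts, Finset.mem_powersetCard] at hw
    have e1 : (u ∪ v).card + (u ∩ v).card = u.card + v.card :=
      Finset.card_union_add_card_inter u v
    have e2 : Disjoint w (u ∪ v) := by
      rw [Finset.disjoint_union_right]
      exact ⟨d1.symm, d2⟩
    have e3 : (w ∪ (u ∪ v)).card = w.card + (u ∪ v).card :=
      Finset.card_union_of_disjoint e2
    have e4 : w ∪ (u ∪ v) ⊆ Finset.Icc 1 n :=
      Finset.union_subset hw.1 (Finset.union_subset hu.1 hv.1)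
    have e5 := Finset.card_le_card e4
    rw [Nat.card_Icc] at e5
    rw [hab, Nat.card_Icc, hu.2, hv.2] at e1
    rw [hw.2] at e3
    omega

lemma neK12 (c p : ℕ) (hc : 1 ≤ c) : K1 c p ≠ K2 c p := by
  intro h
  have hx : (c+1 : ℕ) ∈ K1 c p := (memK1 c p (c+1)).mpr (by omega)
  rw [h] at hx
  have := (memK2 c p (c+1)).mp hx
  omega

lemma neK13 (c p : ℕ) (hc : 1 ≤ c) : K1 c p ≠ K3 c p := by
  intro h
  have hx : (1 : ℕ) ∈ K1 c p := (memK1 c p (1)).mpr (by omega)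
  rw [h] at hx
  have := (memK3 c p (1)).mp hx
  omega

lemma neK14 (c p : ℕ) (hc : 1 ≤ c) : K1 c p ≠ K4 c p := by
  intro h
  have hx : (1 : ℕ) ∈ K1 c p := (memK1 c p (1)).mpr (by omega)
  rw [h] at hx
  have := (memK4 c p (1)).mp hx
  omega

lemma neK15 (c p : ℕ) (hc : 1 ≤ c) : K1 c p ≠ K5 c p := by
  intro h
  have hx : (1 : ℕ) ∈ K1 c p := (memK1 c p (1)).mpr (by omega)
  rw [h] at hx
  have := (memK5 c p (1)).mp hx
  omega

lemma neK23 (c p : ℕ) (hc : 1 ≤ c) : K2 c p ≠ K3 c p := by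
  intro h
  have hx : (1 : ℕ) ∈ K2 c p := (memK2 c p (1)).mpr (by omega)
  rw [h] at hx
  have := (memK3 c p (1)).mp hx
  omega

lemma neK24 (c p : ℕ) (hc : 1 ≤ c) : K2 c p ≠ K4 c p := by
  intro h
  have hx : (1 : ℕ) ∈ K2 c p := (memK2 c p (1)).mpr (by omega)
  rw [h] at hx
  have := (memK4 c p (1)).mp hx
  omega

lemma neK25 (c p : ℕ) (hc : 1 ≤ c) : K2 c p ≠ K5 c p := by
  intro h
  have hx : (1 : ℕ) ∈ K2 c p := (memK2 c p (1)).mpr (by omega)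
  rw [h] at hx
  have := (memK5 c p (1)).mp hx
  omega

lemma neK34 (c p : ℕ) (hc : 1 ≤ c) : K3 c p ≠ K4 c p := by
  intro h
  have hx : (4*c+1 : ℕ) ∈ K3 c p := (memK3 c p (4*c+1)).mpr (by omega)
  rw [h] at hx
  have := (memK4 c p (4*c+1)).mp hx
  omega

lemma neK35 (c p : ℕ) (hc : 1 ≤ c) : K3 c p ≠ K5 c p := by
  intro h
  have hx : (4*c+1 : ℕ) ∈ K3 c p := (memK3 c p (4*c+1)).mpr (by omega)
  rw [h] at hx
  have := (memK5 c p (4*c+1)).mp hx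
  omega

lemma neK45 (c p : ℕ) (hc : 1 ≤ c) : K4 c p ≠ K5 c p := by
  intro h
  have hx : (2*c+1 : ℕ) ∈ K4 c p := (memK4 c p (2*c+1)).mpr (by omega)
  rw [h] at hx
  have := (memK5 c p (2*c+1)).mp hx
  omega

lemma Kcard5 (c p : ℕ) (hc : 1 ≤ c) :
    ({K1 c p, K2 c p, K3 c p, K4 c p, K5 c p} : Finset (Finset ℕ)).card = 5 := by
  rw [Finset.card_insert_of_notMem (by
        simp only [Finset.mem_insert, Finset.mem_singleton]
        push_neg
        exact ⟨neK12 c p hc, neK13 c p hc, neK14 c p hc, neK15 c p hc⟩),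
      Finset.card_insert_of_notMem (by
        simp only [Finset.mem_insert, Finset.mem_singleton]
        push_neg
        exact ⟨neK23 c p hc, neK24 c p hc, neK25 c p hc⟩),
      Finset.card_insert_of_notMem (by
        simp only [Finset.mem_insert, Finset.mem_singleton]
        push_neg
        exact ⟨neK34 c p hc, neK35 c p hc⟩),
      Finset.card_insert_of_notMem (by
        simp only [Finset.mem_singleton]
        exact neK45 c p hc),
      Finset.card_singleton]

set_option maxHeartbeats 1000000 in

lemma Kpairwise (n r t c p : ℕ) (hc : 1 ≤ c) (hct : c + 1 ≤ t) (hcp : 4*c + p = r)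
    (hnn : 10*c + 5*p ≤ n) (hnt : n + t ≤ 3 * r) :
    ∀ u ∈ ({K1 c p, K2 c p, K3 c p, K4 c p, K5 c p} : Finset (Finset ℕ)),
      ∀ v ∈ ({K1 c p, K2 c p, K3 c p, K4 c p, K5 c p} : Finset (Finset ℕ)), u ≠ v →
      ¬ KneserAdj u v ∧ ∀ w ∈ KneserVerts n r, ¬ (KneserAdj u w ∧ KneserAdj w v) := by
  intro u hu v hv huv
  simp only [Finset.mem_insert, Finset.mem_singleton] at hu hv
  rcases hu with rfl | rfl | rfl | rfl | rfl <;>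
    rcases hv with rfl | rfl | rfl | rfl | rfl

  · exact absurd rfl huv

  · exact Kpair' hnt (kvK1 n r c p hc hcp hnn) (kvK2 n r c p hc hcp hnn) (1) (c)
      (interK12 c p) (by omega) (by omega)

  · exact Kpair' hnt (kvK1 n r c p hc hcp hnn) (kvK3 n r c p hc hcp hnn) (c+1) (2*c)
      (interK13 c p) (by omega) (by omega)

  · exact Kpair' hnt (kvK1 n r c p hc hcp hnn) (kvK4 n r c p hc hcp hnn) (2*c+1) (3*c)
      (interK14 c p) (by omega) (by omega)

  · exact Kpair' hnt (kvK1 n r c p hc hcp hnn) (kvK5 n r c p hc hcp hnn) (3*c+1) (4*c)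
      (interK15 c p) (by omega) (by omega)

  · exact Kpair' hnt (kvK2 n r c p hc hcp hnn) (kvK1 n r c p hc hcp hnn) (1) (c)
      (by rw [Finset.inter_comm]; exact interK12 c p) (by omega) (by omega)

  · exact absurd rfl huv

  · exact Kpair' hnt (kvK2 n r c p hc hcp hnn) (kvK3 n r c p hc hcp hnn) (4*c+1) (5*c)
      (interK23 c p) (by omega) (by omega)

  · exact Kpair' hnt (kvK2 n r c p hc hcp hnn) (kvK4 n r c p hc hcp hnn) (5*c+1) (6*c)
      (interK24 c p) (by omega) (by omega)

  · exact Kpair' hnt (kvK2 n r c p hc hcp hnn) (kvK5 n r c p hc hcp hnn) (6*c+1) (7*c)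
      (interK25 c p) (by omega) (by omega)

  · exact Kpair' hnt (kvK3 n r c p hc hcp hnn) (kvK1 n r c p hc hcp hnn) (c+1) (2*c)
      (by rw [Finset.inter_comm]; exact interK13 c p) (by omega) (by omega)

  · exact Kpair' hnt (kvK3 n r c p hc hcp hnn) (kvK2 n r c p hc hcp hnn) (4*c+1) (5*c)
      (by rw [Finset.inter_comm]; exact interK23 c p) (by omega) (by omega)

  · exact absurd rfl huv

  · exact Kpair' hnt (kvK3 n r c p hc hcp hnn) (kvK4 n r c p hc hcp hnn) (7*c+1) (8*c)
      (interK34 c p) (by omega) (by omega)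

  · exact Kpair' hnt (kvK3 n r c p hc hcp hnn) (kvK5 n r c p hc hcp hnn) (8*c+1) (9*c)
      (interK35 c p) (by omega) (by omega)

  · exact Kpair' hnt (kvK4 n r c p hc hcp hnn) (kvK1 n r c p hc hcp hnn) (2*c+1) (3*c)
      (by rw [Finset.inter_comm]; exact interK14 c p) (by omega) (by omega)

  · exact Kpair' hnt (kvK4 n r c p hc hcp hnn) (kvK2 n r c p hc hcp hnn) (5*c+1) (6*c)
      (by rw [Finset.inter_comm]; exact interK24 c p) (by omega) (by omega)

  · exact Kpair' hnt (kvK4 n r c p hc hcp hnn) (kvK3 n r c p hc hcp hnn) (7*c+1) (8*c)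
      (by rw [Finset.inter_comm]; exact interK34 c p) (by omega) (by omega)

  · exact absurd rfl huv

  · exact Kpair' hnt (kvK4 n r c p hc hcp hnn) (kvK5 n r c p hc hcp hnn) (9*c+1) (10*c)
      (interK45 c p) (by omega) (by omega)

  · exact Kpair' hnt (kvK5 n r c p hc hcp hnn) (kvK1 n r c p hc hcp hnn) (3*c+1) (4*c)
      (by rw [Finset.inter_comm]; exact interK15 c p) (by omega) (by omega)

  · exact Kpair' hnt (kvK5 n r c p hc hcp hnn) (kvK2 n r c p hc hcp hnn) (6*c+1) (7*c)
      (by rw [Finset.inter_comm]; exact interK25 c p) (by omega) (by omega)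

  · exact Kpair' hnt (kvK5 n r c p hc hcp hnn) (kvK3 n r c p hc hcp hnn) (8*c+1) (9*c)
      (by rw [Finset.inter_comm]; exact interK35 c p) (by omega) (by omega)

  · exact Kpair' hnt (kvK5 n r c p hc hcp hnn) (kvK4 n r c p hc hcp hnn) (9*c+1) (10*c)
      (by rw [Finset.inter_comm]; exact interK45 c p) (by omega) (by omega)

  · exact absurd rfl huv

set_option maxHeartbeats 1000000 in

lemma Kdepth (c p x : ℕ) (hc : 1 ≤ c) :
    ((({K1 c p, K2 c p, K3 c p, K4 c p, K5 c p} : Finset (Finset ℕ))).filter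
      fun u => x ∈ u).card ≤ 2 := by
  by_contra hcon
  push_neg at hcon
  rw [Finset.two_lt_card_iff] at hcon
  obtain ⟨a, b, d, ha, hb, hd, hab, had, hbd⟩ := hcon
  simp only [Finset.mem_filter, Finset.mem_insert, Finset.mem_singleton] at ha hb hd
  obtain ⟨ha1, ha2⟩ := ha
  obtain ⟨hb1, hb2⟩ := hb
  obtain ⟨hd1, hd2⟩ := hd
  rcases ha1 with ha1 | ha1 | ha1 | ha1 | ha1 <;>
    rcases hb1 with hb1 | hb1 | hb1 | hb1 | hb1 <;>
      rcases hd1 with hd1 | hd1 | hd1 | hd1 | hd1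

  · exact hab (ha1.trans hb1.symm)

  · exact hab (ha1.trans hb1.symm)

  · exact hab (ha1.trans hb1.symm)

  · exact hab (ha1.trans hb1.symm)

  · exact hab (ha1.trans hb1.symm)

  · exact had (ha1.trans hd1.symm)

  · exact hbd (hb1.trans hd1.symm)

  · rw [ha1] at ha2
    rw [hb1] at hb2
    rw [hd1] at hd2
    rw [memK1] at ha2
    rw [memK2] at hb2
    rw [memK3] at hd2
    omega

  · rw [ha1] at ha2
    rw [hb1] at hb2
    rw [hd1] at hd2
    rw [memK1] at ha2
    rw [memK2] at hb2
    rw [memK4] at hd2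
    omega

  · rw [ha1] at ha2
    rw [hb1] at hb2
    rw [hd1] at hd2
    rw [memK1] at ha2
    rw [memK2] at hb2
    rw [memK5] at hd2
    omega

  · exact had (ha1.trans hd1.symm)

  · rw [ha1] at ha2
    rw [hb1] at hb2
    rw [hd1] at hd2
    rw [memK1] at ha2
    rw [memK3] at hb2
    rw [memK2] at hd2
    omega

  · exact hbd (hb1.trans hd1.symm)

  · rw [ha1] at ha2
    rw [hb1] at hb2
    rw [hd1] at hd2
    rw [memK1] at ha2
    rw [memK3] at hb2
    rw [memK4] at hd2
    omega

  · rw [ha1] at ha2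
    rw [hb1] at hb2
    rw [hd1] at hd2
    rw [memK1] at ha2
    rw [memK3] at hb2
    rw [memK5] at hd2
    omega

  · exact had (ha1.trans hd1.symm)

  · rw [ha1] at ha2
    rw [hb1] at hb2
    rw [hd1] at hd2
    rw [memK1] at ha2
    rw [memK4] at hb2
    rw [memK2] at hd2
    omega

  · rw [ha1] at ha2
    rw [hb1] at hb2
    rw [hd1] at hd2
    rw [memK1] at ha2
    rw [memK4] at hb2
    rw [memK3] at hd2
    omega

  · exact hbd (hb1.trans hd1.symm)

  · rw [ha1] at ha2
    rw [hb1] at hb2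
    rw [hd1] at hd2
    rw [memK1] at ha2
    rw [memK4] at hb2
    rw [memK5] at hd2
    omega

  · exact had (ha1.trans hd1.symm)

  · rw [ha1] at ha2
    rw [hb1] at hb2
    rw [hd1] at hd2
    rw [memK1] at ha2
    rw [memK5] at hb2
    rw [memK2] at hd2
    omega

  · rw [ha1] at ha2
    rw [hb1] at hb2
    rw [hd1] at hd2
    rw [memK1] at ha2
    rw [memK5] at hb2
    rw [memK3] at hd2
    omega

  · rw [ha1] at ha2
    rw [hb1] at hb2
    rw [hd1] at hd2
    rw [memK1] at ha2
    rw [memK5] at hb2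
    rw [memK4] at hd2
    omega

  · exact hbd (hb1.trans hd1.symm)

  · exact hbd (hb1.trans hd1.symm)

  · exact had (ha1.trans hd1.symm)

  · rw [ha1] at ha2
    rw [hb1] at hb2
    rw [hd1] at hd2
    rw [memK2] at ha2
    rw [memK1] at hb2
    rw [memK3] at hd2
    omega

  · rw [ha1] at ha2
    rw [hb1] at hb2
    rw [hd1] at hd2
    rw [memK2] at ha2
    rw [memK1] at hb2
    rw [memK4] at hd2
    omega

  · rw [ha1] at ha2
    rw [hb1] at hb2
    rw [hd1] at hd2
    rw [memK2] at ha2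
    rw [memK1] at hb2
    rw [memK5] at hd2
    omega

  · exact hab (ha1.trans hb1.symm)

  · exact hab (ha1.trans hb1.symm)

  · exact hab (ha1.trans hb1.symm)

  · exact hab (ha1.trans hb1.symm)

  · exact hab (ha1.trans hb1.symm)

  · rw [ha1] at ha2
    rw [hb1] at hb2
    rw [hd1] at hd2
    rw [memK2] at ha2
    rw [memK3] at hb2
    rw [memK1] at hd2
    omega

  · exact had (ha1.trans hd1.symm)

  · exact hbd (hb1.trans hd1.symm)

  · rw [ha1] at ha2
    rw [hb1] at hb2
    rw [hd1] at hd2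
    rw [memK2] at ha2
    rw [memK3] at hb2
    rw [memK4] at hd2
    omega

  · rw [ha1] at ha2
    rw [hb1] at hb2
    rw [hd1] at hd2
    rw [memK2] at ha2
    rw [memK3] at hb2
    rw [memK5] at hd2
    omega

  · rw [ha1] at ha2
    rw [hb1] at hb2
    rw [hd1] at hd2
    rw [memK2] at ha2
    rw [memK4] at hb2
    rw [memK1] at hd2
    omega

  · exact had (ha1.trans hd1.symm)

  · rw [ha1] at ha2
    rw [hb1] at hb2
    rw [hd1] at hd2
    rw [memK2] at ha2
    rw [memK4] at hb2
    rw [memK3] at hd2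
    omega

  · exact hbd (hb1.trans hd1.symm)

  · rw [ha1] at ha2
    rw [hb1] at hb2
    rw [hd1] at hd2
    rw [memK2] at ha2
    rw [memK4] at hb2
    rw [memK5] at hd2
    omega

  · rw [ha1] at ha2
    rw [hb1] at hb2
    rw [hd1] at hd2
    rw [memK2] at ha2
    rw [memK5] at hb2
    rw [memK1] at hd2
    omega

  · exact had (ha1.trans hd1.symm)

  · rw [ha1] at ha2
    rw [hb1] at hb2
    rw [hd1] at hd2
    rw [memK2] at ha2
    rw [memK5] at hb2
    rw [memK3] at hd2
    omega

  · rw [ha1] at ha2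
    rw [hb1] at hb2
    rw [hd1] at hd2
    rw [memK2] at ha2
    rw [memK5] at hb2
    rw [memK4] at hd2
    omega

  · exact hbd (hb1.trans hd1.symm)

  · exact hbd (hb1.trans hd1.symm)

  · rw [ha1] at ha2
    rw [hb1] at hb2
    rw [hd1] at hd2
    rw [memK3] at ha2
    rw [memK1] at hb2
    rw [memK2] at hd2
    omega

  · exact had (ha1.trans hd1.symm)

  · rw [ha1] at ha2
    rw [hb1] at hb2
    rw [hd1] at hd2
    rw [memK3] at ha2
    rw [memK1] at hb2
    rw [memK4] at hd2
    omega

  · rw [ha1] at ha2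
    rw [hb1] at hb2
    rw [hd1] at hd2
    rw [memK3] at ha2
    rw [memK1] at hb2
    rw [memK5] at hd2
    omega

  · rw [ha1] at ha2
    rw [hb1] at hb2
    rw [hd1] at hd2
    rw [memK3] at ha2
    rw [memK2] at hb2
    rw [memK1] at hd2
    omega

  · exact hbd (hb1.trans hd1.symm)

  · exact had (ha1.trans hd1.symm)

  · rw [ha1] at ha2
    rw [hb1] at hb2
    rw [hd1] at hd2
    rw [memK3] at ha2
    rw [memK2] at hb2
    rw [memK4] at hd2
    omega

  · rw [ha1] at ha2
    rw [hb1] at hb2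
    rw [hd1] at hd2
    rw [memK3] at ha2
    rw [memK2] at hb2
    rw [memK5] at hd2
    omega

  · exact hab (ha1.trans hb1.symm)

  · exact hab (ha1.trans hb1.symm)

  · exact hab (ha1.trans hb1.symm)

  · exact hab (ha1.trans hb1.symm)

  · exact hab (ha1.trans hb1.symm)

  · rw [ha1] at ha2
    rw [hb1] at hb2
    rw [hd1] at hd2
    rw [memK3] at ha2
    rw [memK4] at hb2
    rw [memK1] at hd2
    omega

  · rw [ha1] at ha2
    rw [hb1] at hb2
    rw [hd1] at hd2
    rw [memK3] at ha2
    rw [memK4] at hb2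
    rw [memK2] at hd2
    omega

  · exact had (ha1.trans hd1.symm)

  · exact hbd (hb1.trans hd1.symm)

  · rw [ha1] at ha2
    rw [hb1] at hb2
    rw [hd1] at hd2
    rw [memK3] at ha2
    rw [memK4] at hb2
    rw [memK5] at hd2
    omega

  · rw [ha1] at ha2
    rw [hb1] at hb2
    rw [hd1] at hd2
    rw [memK3] at ha2
    rw [memK5] at hb2
    rw [memK1] at hd2
    omega

  · rw [ha1] at ha2
    rw [hb1] at hb2
    rw [hd1] at hd2
    rw [memK3] at ha2
    rw [memK5] at hb2
    rw [memK2] at hd2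
    omega

  · exact had (ha1.trans hd1.symm)

  · rw [ha1] at ha2
    rw [hb1] at hb2
    rw [hd1] at hd2
    rw [memK3] at ha2
    rw [memK5] at hb2
    rw [memK4] at hd2
    omega

  · exact hbd (hb1.trans hd1.symm)

  · exact hbd (hb1.trans hd1.symm)

  · rw [ha1] at ha2
    rw [hb1] at hb2
    rw [hd1] at hd2
    rw [memK4] at ha2
    rw [memK1] at hb2
    rw [memK2] at hd2
    omega

  · rw [ha1] at ha2
    rw [hb1] at hb2
    rw [hd1] at hd2
    rw [memK4] at ha2
    rw [memK1] at hb2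
    rw [memK3] at hd2
    omega

  · exact had (ha1.trans hd1.symm)

  · rw [ha1] at ha2
    rw [hb1] at hb2
    rw [hd1] at hd2
    rw [memK4] at ha2
    rw [memK1] at hb2
    rw [memK5] at hd2
    omega

  · rw [ha1] at ha2
    rw [hb1] at hb2
    rw [hd1] at hd2
    rw [memK4] at ha2
    rw [memK2] at hb2
    rw [memK1] at hd2
    omega

  · exact hbd (hb1.trans hd1.symm)

  · rw [ha1] at ha2
    rw [hb1] at hb2
    rw [hd1] at hd2
    rw [memK4] at ha2
    rw [memK2] at hb2
    rw [memK3] at hd2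
    omega

  · exact had (ha1.trans hd1.symm)

  · rw [ha1] at ha2
    rw [hb1] at hb2
    rw [hd1] at hd2
    rw [memK4] at ha2
    rw [memK2] at hb2
    rw [memK5] at hd2
    omega

  · rw [ha1] at ha2
    rw [hb1] at hb2
    rw [hd1] at hd2
    rw [memK4] at ha2
    rw [memK3] at hb2
    rw [memK1] at hd2
    omega

  · rw [ha1] at ha2
    rw [hb1] at hb2
    rw [hd1] at hd2
    rw [memK4] at ha2
    rw [memK3] at hb2
    rw [memK2] at hd2
    omega

  · exact hbd (hb1.trans hd1.symm)

  · exact had (ha1.trans hd1.symm)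

  · rw [ha1] at ha2
    rw [hb1] at hb2
    rw [hd1] at hd2
    rw [memK4] at ha2
    rw [memK3] at hb2
    rw [memK5] at hd2
    omega

  · exact hab (ha1.trans hb1.symm)

  · exact hab (ha1.trans hb1.symm)

  · exact hab (ha1.trans hb1.symm)

  · exact hab (ha1.trans hb1.symm)

  · exact hab (ha1.trans hb1.symm)

  · rw [ha1] at ha2
    rw [hb1] at hb2
    rw [hd1] at hd2
    rw [memK4] at ha2
    rw [memK5] at hb2
    rw [memK1] at hd2
    omega

  · rw [ha1] at ha2
    rw [hb1] at hb2
    rw [hd1] at hd2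
    rw [memK4] at ha2
    rw [memK5] at hb2
    rw [memK2] at hd2
    omega

  · rw [ha1] at ha2
    rw [hb1] at hb2
    rw [hd1] at hd2
    rw [memK4] at ha2
    rw [memK5] at hb2
    rw [memK3] at hd2
    omega

  · exact had (ha1.trans hd1.symm)

  · exact hbd (hb1.trans hd1.symm)

  · exact hbd (hb1.trans hd1.symm)

  · rw [ha1] at ha2
    rw [hb1] at hb2
    rw [hd1] at hd2
    rw [memK5] at ha2
    rw [memK1] at hb2
    rw [memK2] at hd2
    omega

  · rw [ha1] at ha2
    rw [hb1] at hb2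
    rw [hd1] at hd2
    rw [memK5] at ha2
    rw [memK1] at hb2
    rw [memK3] at hd2
    omega

  · rw [ha1] at ha2
    rw [hb1] at hb2
    rw [hd1] at hd2
    rw [memK5] at ha2
    rw [memK1] at hb2
    rw [memK4] at hd2
    omega

  · exact had (ha1.trans hd1.symm)

  · rw [ha1] at ha2
    rw [hb1] at hb2
    rw [hd1] at hd2
    rw [memK5] at ha2
    rw [memK2] at hb2
    rw [memK1] at hd2
    omega

  · exact hbd (hb1.trans hd1.symm)

  · rw [ha1] at ha2
    rw [hb1] at hb2
    rw [hd1] at hd2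
    rw [memK5] at ha2
    rw [memK2] at hb2
    rw [memK3] at hd2
    omega

  · rw [ha1] at ha2
    rw [hb1] at hb2
    rw [hd1] at hd2
    rw [memK5] at ha2
    rw [memK2] at hb2
    rw [memK4] at hd2
    omega

  · exact had (ha1.trans hd1.symm)

  · rw [ha1] at ha2
    rw [hb1] at hb2
    rw [hd1] at hd2
    rw [memK5] at ha2
    rw [memK3] at hb2
    rw [memK1] at hd2
    omega

  · rw [ha1] at ha2
    rw [hb1] at hb2
    rw [hd1] at hd2
    rw [memK5] at ha2
    rw [memK3] at hb2
    rw [memK2] at hd2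
    omega

  · exact hbd (hb1.trans hd1.symm)

  · rw [ha1] at ha2
    rw [hb1] at hb2
    rw [hd1] at hd2
    rw [memK5] at ha2
    rw [memK3] at hb2
    rw [memK4] at hd2
    omega

  · exact had (ha1.trans hd1.symm)

  · rw [ha1] at ha2
    rw [hb1] at hb2
    rw [hd1] at hd2
    rw [memK5] at ha2
    rw [memK4] at hb2
    rw [memK1] at hd2
    omega

  · rw [ha1] at ha2
    rw [hb1] at hb2
    rw [hd1] at hd2
    rw [memK5] at ha2
    rw [memK4] at hb2
    rw [memK2] at hd2
    omega

  · rw [ha1] at ha2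
    rw [hb1] at hb2
    rw [hd1] at hd2
    rw [memK5] at ha2
    rw [memK4] at hb2
    rw [memK3] at hd2
    omega

  · exact hbd (hb1.trans hd1.symm)

  · exact had (ha1.trans hd1.symm)

  · exact hab (ha1.trans hb1.symm)

  · exact hab (ha1.trans hb1.symm)

  · exact hab (ha1.trans hb1.symm)

  · exact hab (ha1.trans hb1.symm)

  · exact hab (ha1.trans hb1.symm)

lemma caseA (r t n : ℕ) (hr : 3 ≤ r) (ht2 : 2 ≤ t) (ht : 4 * t ≤ r + 4)
    (hcase : 2 * r + t ≤ 10 * (t - 1)) (hn : n = 3 * r - t) :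
    ∃ S : Finset (Finset ℕ), IsTwoPacking n r S ∧ S.card = 5 ∧
      ∀ x ∈ Finset.Icc 1 n, (S.filter fun u => x ∈ u).card ≤ 2 := by
  obtain ⟨c, hcd⟩ : ∃ c, c = t - 1 := ⟨_, rfl⟩
  obtain ⟨p, hpd⟩ : ∃ p, p = r - 4 * (t - 1) := ⟨_, rfl⟩
  have hc : 1 ≤ c := by omega
  have hct : c + 1 ≤ t := by omega
  have hcp : 4 * c + p = r := by omega
  have hnn : 10 * c + 5 * p ≤ n := by omega
  have hnt : n + t ≤ 3 * r := by omega
  refine ⟨{K1 c p, K2 c p, K3 c p, K4 c p, K5 c p}, ⟨?_, Kpairwise n r t c p hc hct hcp hnn hnt⟩,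
    Kcard5 c p hc, fun x _ => Kdepth c p x hc⟩
  intro u hu
  simp only [Finset.mem_insert, Finset.mem_singleton] at hu
  rcases hu with rfl | rfl | rfl | rfl | rfl
  exacts [kvK1 n r c p hc hcp hnn, kvK2 n r c p hc hcp hnn, kvK3 n r c p hc hcp hnn,
    kvK4 n r c p hc hcp hnn, kvK5 n r c p hc hcp hnn]

theorem stmt_15 (r t : ℕ) (hr : 3 ≤ r) (ht2 : 2 ≤ t) (ht : 4 * t ≤ r + 4)
    (hp : 5 ≤ twoPackingNum (3 * r - t) r) :
    ∃ S : Finset (Finset ℕ), IsTwoPacking (3 * r - t) r S ∧ S.card = 5 ∧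
      ∀ x ∈ Finset.Icc 1 (3 * r - t), (S.filter fun u => x ∈ u).card ≤ 2 := by
  set n := 3 * r - t with hn
  by_cases hcase : 2 * r + t ≤ 10 * (t - 1)
  · exact caseA r t n hr ht2 ht hcase hn
  · exfalso
    have hM : ∀ m ∈ {m | ∃ S, IsTwoPacking n r S ∧ S.card = m}, m ≤ 4 := by
      rintro m ⟨S, ⟨hSv, hSp⟩, rfl⟩
      by_contra hm
      push_neg at hm
      obtain ⟨S', hS'sub, hS'card⟩ := Finset.exists_subset_card_eq (show 5 ≤ S.card by omega)
      obtain ⟨u1, hu1⟩ := Finset.card_pos.mp (by omega : 0 < S'.card)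
      have h2card : (S'.erase u1).card = 4 := by
        rw [Finset.card_erase_of_mem hu1, hS'card]
      obtain ⟨u2, hu2⟩ := Finset.card_pos.mp (by omega : 0 < (S'.erase u1).card)
      have h3card : ((S'.erase u1).erase u2).card = 3 := by
        rw [Finset.card_erase_of_mem hu2, h2card]
      obtain ⟨u3, hu3⟩ := Finset.card_pos.mp (by omega : 0 < ((S'.erase u1).erase u2).card)
      have h4card : (((S'.erase u1).erase u2).erase u3).card = 2 := by
        rw [Finset.card_erase_of_mem hu3, h3card]
      obtain ⟨u4, hu4⟩ := Finset.card_pos.mp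
        (by omega : 0 < (((S'.erase u1).erase u2).erase u3).card)
      have h5card : ((((S'.erase u1).erase u2).erase u3).erase u4).card = 1 := by
        rw [Finset.card_erase_of_mem hu4, h4card]
      obtain ⟨u5, hu5⟩ := Finset.card_pos.mp
        (by omega : 0 < ((((S'.erase u1).erase u2).erase u3).erase u4).card)
      have n54 : u5 ≠ u4 := Finset.ne_of_mem_erase hu5
      have hu5a := Finset.mem_of_mem_erase hu5
      have n53 : u5 ≠ u3 := Finset.ne_of_mem_erase hu5a
      have hu5b := Finset.mem_of_mem_erase hu5a
      have n52 : u5 ≠ u2 := Finset.ne_of_mem_erase hu5b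
      have hu5c := Finset.mem_of_mem_erase hu5b
      have n51 : u5 ≠ u1 := Finset.ne_of_mem_erase hu5c
      have hu5' : u5 ∈ S' := Finset.mem_of_mem_erase hu5c
      have n43 : u4 ≠ u3 := Finset.ne_of_mem_erase hu4
      have hu4a := Finset.mem_of_mem_erase hu4
      have n42 : u4 ≠ u2 := Finset.ne_of_mem_erase hu4a
      have hu4b := Finset.mem_of_mem_erase hu4a
      have n41 : u4 ≠ u1 := Finset.ne_of_mem_erase hu4b
      have hu4' : u4 ∈ S' := Finset.mem_of_mem_erase hu4b
      have n32 : u3 ≠ u2 := Finset.ne_of_mem_erase hu3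
      have hu3a := Finset.mem_of_mem_erase hu3
      have n31 : u3 ≠ u1 := Finset.ne_of_mem_erase hu3a
      have hu3' : u3 ∈ S' := Finset.mem_of_mem_erase hu3a
      have n21 : u2 ≠ u1 := Finset.ne_of_mem_erase hu2
      have hu2' : u2 ∈ S' := Finset.mem_of_mem_erase hu2
      have uS1 : u1 ∈ S := hS'sub hu1
      have uS2 : u2 ∈ S := hS'sub hu2'
      have uS3 : u3 ∈ S := hS'sub hu3'
      have uS4 : u4 ∈ S := hS'sub hu4'
      have uS5 : u5 ∈ S := hS'sub hu5'
      have pub : ∀ u v : Finset ℕ, u ∈ S → v ∈ S → u ≠ v → (u ∩ v).card ≤ t - 1 := by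
        intro u v huS hvS huv
        have hu := hSv huS
        have hv := hSv hvS
        rw [KneserVerts, Finset.mem_powersetCard] at hu hv
        by_contra hgt
        push_neg at hgt
        have e1 : (u ∪ v).card + (u ∩ v).card = u.card + v.card :=
          Finset.card_union_add_card_inter u v
        rw [hu.2, hv.2] at e1
        have e2 : u ∪ v ⊆ Finset.Icc 1 n := Finset.union_subset hu.1 hv.1
        have e4 : r ≤ (Finset.Icc 1 n \ (u ∪ v)).card := by
          rw [Finset.card_sdiff_of_subset e2, Nat.card_Icc]
          omega
        obtain ⟨w, hwsub, hwcard⟩ := Finset.exists_subset_card_eq e4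
        have hwIcc : w ⊆ Finset.Icc 1 n := hwsub.trans (Finset.sdiff_subset)
        have hwd : Disjoint w (u ∪ v) :=
          Finset.disjoint_left.mpr fun a haw hauv => (Finset.mem_sdiff.mp (hwsub haw)).2 hauv
        rw [Finset.disjoint_union_right] at hwd
        have hwv : w ∈ KneserVerts n r := by
          rw [KneserVerts, Finset.mem_powersetCard]
          exact ⟨hwIcc, hwcard⟩
        have hune : u ≠ w := by
          intro h
          have he : u = ∅ := disjoint_self.mp (h ▸ hwd.1)
          rw [he] at hu
          simp at hu
          omega
        have hvne : w ≠ v := by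
          intro h
          have he : v = ∅ := disjoint_self.mp (h ▸ hwd.2)
          rw [he] at hv
          simp at hv
          omega
        exact (hSp u huS v hvS huv).2 w hwv ⟨⟨hune, hwd.1.symm⟩, ⟨hvne, hwd.2⟩⟩
      have hcard1 : u1.card = r := by
        have h := hSv uS1
        rw [KneserVerts, Finset.mem_powersetCard] at h
        exact h.2
      have hsub1 : u1 ⊆ Finset.Icc 1 n := by
        have h := hSv uS1
        rw [KneserVerts, Finset.mem_powersetCard] at h
        exact h.1
      have hcard2 : u2.card = r := by
        have h := hSv uS2
        rw [KneserVerts, Finset.mem_powersetCard] at h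
        exact h.2
      have hsub2 : u2 ⊆ Finset.Icc 1 n := by
        have h := hSv uS2
        rw [KneserVerts, Finset.mem_powersetCard] at h
        exact h.1
      have hcard3 : u3.card = r := by
        have h := hSv uS3
        rw [KneserVerts, Finset.mem_powersetCard] at h
        exact h.2
      have hsub3 : u3 ⊆ Finset.Icc 1 n := by
        have h := hSv uS3
        rw [KneserVerts, Finset.mem_powersetCard] at h
        exact h.1
      have hcard4 : u4.card = r := by
        have h := hSv uS4
        rw [KneserVerts, Finset.mem_powersetCard] at h
        exact h.2
      have hsub4 : u4 ⊆ Finset.Icc 1 n := by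
        have h := hSv uS4
        rw [KneserVerts, Finset.mem_powersetCard] at h
        exact h.1
      have hcard5 : u5.card = r := by
        have h := hSv uS5
        rw [KneserVerts, Finset.mem_powersetCard] at h
        exact h.2
      have hsub5 : u5 ⊆ Finset.Icc 1 n := by
        have h := hSv uS5
        rw [KneserVerts, Finset.mem_powersetCard] at h
        exact h.1
      have p12 : (u1 ∩ u2).card ≤ t - 1 := pub u1 u2 uS1 uS2 (Ne.symm n21)
      have p13 : (u1 ∩ u3).card ≤ t - 1 := pub u1 u3 uS1 uS3 (Ne.symm n31)
      have p14 : (u1 ∩ u4).card ≤ t - 1 := pub u1 u4 uS1 uS4 (Ne.symm n41)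
      have p15 : (u1 ∩ u5).card ≤ t - 1 := pub u1 u5 uS1 uS5 (Ne.symm n51)
      have p23 : (u2 ∩ u3).card ≤ t - 1 := pub u2 u3 uS2 uS3 (Ne.symm n32)
      have p24 : (u2 ∩ u4).card ≤ t - 1 := pub u2 u4 uS2 uS4 (Ne.symm n42)
      have p25 : (u2 ∩ u5).card ≤ t - 1 := pub u2 u5 uS2 uS5 (Ne.symm n52)
      have p34 : (u3 ∩ u4).card ≤ t - 1 := pub u3 u4 uS3 uS4 (Ne.symm n43)
      have p35 : (u3 ∩ u5).card ≤ t - 1 := pub u3 u5 uS3 uS5 (Ne.symm n53)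
      have p45 : (u4 ∩ u5).card ≤ t - 1 := pub u4 u5 uS4 uS5 (Ne.symm n54)
      have b2 := Finset.card_union_add_card_inter u1 u2
      have b3 := Finset.card_union_add_card_inter (u1 ∪ u2) u3
      have b4 := Finset.card_union_add_card_inter (u1 ∪ u2 ∪ u3) u4
      have b5 := Finset.card_union_add_card_inter (u1 ∪ u2 ∪ u3 ∪ u4) u5
      have d3 : ((u1 ∪ u2) ∩ u3).card ≤ (u1 ∩ u3).card + (u2 ∩ u3).card := by
        rw [Finset.union_inter_distrib_right]
        exact Finset.card_union_le _ _
      have d4 : ((u1 ∪ u2 ∪ u3) ∩ u4).card ≤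
          (u1 ∩ u4).card + (u2 ∩ u4).card + (u3 ∩ u4).card := by
        rw [Finset.union_inter_distrib_right, Finset.union_inter_distrib_right]
        exact le_trans (Finset.card_union_le _ _)
          (Nat.add_le_add_right (Finset.card_union_le _ _) _)
      have d5 : ((u1 ∪ u2 ∪ u3 ∪ u4) ∩ u5).card ≤
          (u1 ∩ u5).card + (u2 ∩ u5).card + (u3 ∩ u5).card + (u4 ∩ u5).card := by
        rw [Finset.union_inter_distrib_right, Finset.union_inter_distrib_right,
          Finset.union_inter_distrib_right]
        exact le_trans (Finset.card_union_le _ _)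
          (Nat.add_le_add_right (le_trans (Finset.card_union_le _ _)
            (Nat.add_le_add_right (Finset.card_union_le _ _) _)) _)
      have usub : u1 ∪ u2 ∪ u3 ∪ u4 ∪ u5 ⊆ Finset.Icc 1 n :=
        Finset.union_subset (Finset.union_subset (Finset.union_subset
          (Finset.union_subset hsub1 hsub2) hsub3) hsub4) hsub5
      have utot := Finset.card_le_card usub
      rw [Nat.card_Icc] at utot
      omega
    have hMne : Set.Nonempty {m | ∃ S, IsTwoPacking n r S ∧ S.card = m} :=
      ⟨0, ∅, ⟨Finset.empty_subset _, fun u hu => absurd hu (Finset.notMem_empty u)⟩,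
        Finset.card_empty⟩
    have hle : twoPackingNum n r ≤ 4 := by
      rw [twoPackingNum]
      exact csSup_le hMne hM
    omega
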